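/- arXiv:1601.01648 — 5 statements merged into one kernel-verified Lean document; each statement's English description precedes it below -/
import Mathlib

section
/- Let S be a transition system with a set of states, a set Init of initial states, a predicate Entry on states, and three kinds of state changes: flows, jumps, and topology updates. A run is a sequence s_0, s_1, ... where s_0 ∈ Init, each consecutive pair is a flow, a jump, or a topology update, and each flow is immediately followed by a jump or a topology update. Suppose Entry has exhaustive entry conditions: (i) every state satisfying Entry is in Init, and (ii) for every jump or topology update (s,s'), Entry holds at s'. Call a state s globally mode reachable (GMR) if there is a state s_0 satisfying Entry with a flow from s_0 to s; a state change (s,s') is GMR if s is GMR. Let Safe be a predicate on states. Then: Safe holds at every state of every run starting in a state satisfying Entry if and only if (1) every state satisfying Entry satisfies Safe, (2) Safe is preserved under all flows starting from a state satisfying Entry, (3) Safe is preserved under all GMR jumps, and (4) Safe is preserved under all GMR topology updates. -/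
/-- Safety with exhaustive entry conditions is equivalent to the
four invariance conditions (Theorem 3.4 of the paper), in an abstract
transition system with finite runs. -/
theorem safety_iff_invariance_conditions
    {State : Type*} (Init : Set State)
    (Entry Safe : State → Prop)
    (flow jump update : State → State → Prop)
    -- exhaustive entry conditions
    (hInit : ∀ s, Entry s → s ∈ Init)
    (hEntryPost : ∀ s s', jump s s' ∨ update s s' → Entry s')
    -- zero-length flows exist, so every Entry state is GMR
    (hflowRefl : ∀ s, flow s s) :
    (∀ (r : ℕ → State) (N : ℕ),
        r 0 ∈ Init → Entry (r 0) →
        (∀ n, n < N →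
          flow (r n) (r (n+1)) ∨ jump (r n) (r (n+1)) ∨ update (r n) (r (n+1))) →
        (∀ n, n + 1 < N → flow (r n) (r (n+1)) →
          jump (r (n+1)) (r (n+2)) ∨ update (r (n+1)) (r (n+2))) →
        ∀ n, n ≤ N → Safe (r n))
    ↔ ((∀ s, Entry s → Safe s) ∧
       (∀ s s', Entry s → Safe s → flow s s' → Safe s') ∧
       (∀ s s', (∃ s0, Entry s0 ∧ flow s0 s) → Safe s → jump s s' → Safe s') ∧
       (∀ s s', (∃ s0, Entry s0 ∧ flow s0 s) → Safe s → update s s' → Safe s')) := by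
  constructor
  · intro H
    refine ⟨?_, ?_, ?_, ?_⟩
    · intro s hs
      exact H (fun _ => s) 0 (hInit s hs) hs (by omega) (by omega) 0 le_rfl
    · intro s s' hs _ hf
      have := H (fun n => if n = 0 then s else s') 1 (hInit s hs) hs
        (fun n hn => by interval_cases n; simp [hf])
        (by omega) 1 le_rfl
      simpa using this
    · intro s s' ⟨s0, hs0, hfs⟩ _ hj
      have := H (fun n => if n = 0 then s0 else if n = 1 then s else s') 2
        (hInit s0 hs0) hs0
        (fun n hn => by interval_cases n <;> simp [hfs, hj])
        (fun n hn hf => by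
          obtain rfl : n = 0 := by omega
          simp [hj])
        2 le_rfl
      simpa using this
    · intro s s' ⟨s0, hs0, hfs⟩ _ hu
      have := H (fun n => if n = 0 then s0 else if n = 1 then s else s') 2
        (hInit s0 hs0) hs0
        (fun n hn => by interval_cases n <;> simp [hfs, hu])
        (fun n hn hf => by
          obtain rfl : n = 0 := by omega
          simp [hu])
        2 le_rfl
      simpa using this
  · rintro ⟨h1, h2, h3, h4⟩ r N _ hEntry0 hstep halt
    have key : ∀ n, n ≤ N → Safe (r n) ∧
        (Entry (r n) ∨ (∃ n', n = n' + 1 ∧ Entry (r n') ∧ flow (r n') (r n))) := by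
      intro n
      induction n with
      | zero => intro _; exact ⟨h1 _ hEntry0, Or.inl hEntry0⟩
      | succ m ih =>
        intro hm
        obtain ⟨hSafe, hE⟩ := ih (by omega)
        have hGMR : ∃ s0, Entry s0 ∧ flow s0 (r m) := by
          rcases hE with h | ⟨n', rfl, hE', hf'⟩
          · exact ⟨r m, h, hflowRefl _⟩
          · exact ⟨r n', hE', hf'⟩
        by_cases hju : jump (r m) (r (m+1)) ∨ update (r m) (r (m+1))
        · have hE' : Entry (r (m+1)) := hEntryPost _ _ hju
          rcases hju with hj | hu
          · exact ⟨h3 _ _ hGMR hSafe hj, Or.inl hE'⟩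
          · exact ⟨h4 _ _ hGMR hSafe hu, Or.inl hE'⟩
        · have hf : flow (r m) (r (m+1)) := by
            rcases hstep m (by omega) with h | h | h
            · exact h
            · exact absurd (Or.inl h) hju
            · exact absurd (Or.inr h) hju
          have hEm : Entry (r m) := by
            rcases hE with h | ⟨n', hn', hE', hf'⟩
            · exact h
            · subst hn'
              exact absurd (halt n' (by omega) hf') hju
          exact ⟨h2 _ _ hEm hSafe hf, Or.inr ⟨m, rfl, hEm, hf⟩⟩
    intro n hn
    exact (key n hn).1
end

section
/- In the abstract transition system above, assume Entry has exhaustive entry conditions and that the reflexive (zero-length) flow (s,s) is a flow for every state s. Then every state occurring in any run starting from a state satisfying Entry is globally mode reachable (GMR), i.e., reachable by a single flow from some state satisfying Entry. -/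
/-- under exhaustive entry conditions and reflexive flows, every
state occurring in a run starting from an Entry state is globally mode
reachable (GMR). -/
theorem run_states_are_GMR
    {State : Type*} (Init : Set State)
    (Entry : State → Prop)
    (flow jump update : State → State → Prop)
    (hInit : ∀ s, Entry s → s ∈ Init)
    (hEntryPost : ∀ s s', jump s s' ∨ update s s' → Entry s')
    (hflowRefl : ∀ s, flow s s) :
    ∀ (r : ℕ → State) (N : ℕ),
      r 0 ∈ Init → Entry (r 0) →
      (∀ n, n < N →
        flow (r n) (r (n+1)) ∨ jump (r n) (r (n+1)) ∨ update (r n) (r (n+1))) →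
      (∀ n, n + 1 < N → flow (r n) (r (n+1)) →
        jump (r (n+1)) (r (n+2)) ∨ update (r (n+1)) (r (n+2))) →
      ∀ n, n ≤ N → ∃ s0, Entry s0 ∧ flow s0 (r n) := by
  intro r N h0 hE hstep _hff
  -- strengthened invariant: Entry (r n) or r n is one flow-step after an Entry state
  have key : ∀ n, n ≤ N →
      Entry (r n) ∨ (Entry (r n) ∧ True) ∨
        ∃ m, m + 1 = n ∧ Entry (r m) ∧ flow (r m) (r n) := by
    intro n
    induction n with
    | zero => intro _; exact Or.inl hE
    | succ k ih =>
      intro hk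
      have hkN : k < N := Nat.lt_of_succ_le hk
      rcases hstep k hkN with hf | hju
      · rcases ih (Nat.le_of_lt hkN) with h | h | ⟨m, hm, hEm, hfm⟩
        · exact Or.inr (Or.inr ⟨k, rfl, h, hf⟩)
        · exact Or.inr (Or.inr ⟨k, rfl, h.1, hf⟩)
        · -- previous step was a flow immediately followed by this step,
          -- which must therefore be a jump/update, giving Entry (r (k+1))
          subst hm
          exact Or.inl (hEntryPost _ _ (_hff m (by omega) hfm))
      · exact Or.inl (hEntryPost _ _ hju)
  intro n hn
  rcases key n hn with h | h | ⟨m, hm, hEm, hfm⟩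
  · exact ⟨r n, h, hflowRefl _⟩
  · exact ⟨r n, h.1, hflowRefl _⟩
  · exact ⟨r m, hEm, hfm⟩
end

section
/- With the setup of the previous sequentialization lemma, if Safe is NOT preserved by a simultaneous parallel jump of components c_1,...,c_k (i.e., there exist valuations v_0, v_k with Safe(v_0), all guards holding at v_0, v_k obtained by simultaneously applying the component jumps, and ¬Safe(v_k)), then there exists an index i_0 ∈ {1,...,k} and intermediate valuations v_1,...,v_{k-1} obtained by applying the jumps sequentially, such that Safe(v_{i_0 - 1}) holds, guard_{i_0}(v_{i_0 - 1}) holds, (v_{i_0 - 1}, v_{i_0}) is a single jump of component c_{i_0}, and ¬Safe(v_{i_0}). -/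
/-- counterexample extraction.  If a simultaneous parallel jump
violates Safe, then along the sequentialization of the jump there is a single
component jump violating Safe. -/
theorem parallel_violation_yields_single_violation
    {V : Type*} {k : ℕ} (comp : V → Fin k)
    (guard : Fin k → (V → ℝ) → Prop)
    (jumpR : Fin k → (V → ℝ) → (V → ℝ) → Prop)
    (Safe : (V → ℝ) → Prop)
    (hguard_local : ∀ (i : Fin k) (v v' : V → ℝ),
      (∀ x, comp x = i → v x = v' x) → (guard i v ↔ guard i v'))
    (hjump_local : ∀ (i : Fin k) (v v' u u' : V → ℝ),
      (∀ x, comp x = i → v x = u x) → (∀ x, comp x = i → v' x = u' x) →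
      jumpR i v v' → jumpR i u u')
    (v0 vk : V → ℝ)
    (hSafe0 : Safe v0)
    (hguards : ∀ i, guard i v0)
    -- simultaneous parallel jump from v0 to vk
    (w : Fin k → (V → ℝ))
    (hw : ∀ i, jumpR i v0 (w i) ∧ ∀ x, comp x ≠ i → w i x = v0 x)
    (hvk : ∀ x, vk x = w (comp x) x)
    (hUnsafe : ¬ Safe vk) :
    ∃ v : ℕ → (V → ℝ),
      v 0 = v0 ∧ v k = vk ∧
      (∀ i : Fin k,
        jumpR i (v i.val) (v (i.val + 1)) ∧
        ∀ x, comp x ≠ i → v (i.val + 1) x = v i.val x) ∧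
      ∃ i0 : Fin k,
        Safe (v i0.val) ∧ guard i0 (v i0.val) ∧
        jumpR i0 (v i0.val) (v (i0.val + 1)) ∧ ¬ Safe (v (i0.val + 1)) := by
  classical
  set vseq : ℕ → (V → ℝ) := fun n x => if (comp x).val < n then w (comp x) x else v0 x
    with hvseq
  have hv0 : vseq 0 = v0 := by
    funext x; simp [hvseq]
  have hvk' : vseq k = vk := by
    funext x
    simp [hvseq, (comp x).isLt, hvk x]
  have hjumps : ∀ i : Fin k,
      jumpR i (vseq i.val) (vseq (i.val + 1)) ∧
      ∀ x, comp x ≠ i → vseq (i.val + 1) x = vseq i.val x := by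
    intro i
    constructor
    · refine hjump_local i v0 (w i) (vseq i.val) (vseq (i.val + 1)) ?_ ?_ (hw i).1
      · intro x hx
        simp [hvseq, hx]
      · intro x hx
        simp [hvseq, hx, Nat.lt_succ_self]
    · intro x hx
      have hne : (comp x).val ≠ i.val := fun h => hx (Fin.ext h)
      by_cases h : (comp x).val < i.val
      · simp [hvseq, h, Nat.lt_succ_of_lt h]
      · have h2 : ¬ (comp x).val < i.val + 1 := by omega
        simp [hvseq, h, h2]
  have hex : ∃ n, n < k ∧ Safe (vseq n) ∧ ¬ Safe (vseq (n + 1)) := by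
    by_contra hcon
    push_neg at hcon
    have key : ∀ n, n ≤ k → Safe (vseq n) := by
      intro n hn
      induction n with
      | zero => simpa [hv0] using hSafe0
      | succ m ih =>
        exact hcon m (by omega) (ih (by omega))
    exact hUnsafe (hvk' ▸ key k le_rfl)
  obtain ⟨n, hnk, hS, hU⟩ := hex
  refine ⟨vseq, hv0, hvk', hjumps, ⟨n, hnk⟩, hS, ?_, (hjumps ⟨n, hnk⟩).1, hU⟩
  refine (hguard_local ⟨n, hnk⟩ (vseq n) v0 ?_).mpr (hguards _)
  intro x hx
  simp [hvseq, hx]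
end

section
/- Consider the car model on two lanes: positions pos : I → ℝ and lanes lane : I → ℝ of cars indexed by a set I with a distinguished element nil, and a pointer front : I → I. Assume the entry condition: for all i ≠ nil with front(i) ≠ nil, pos(front(i)) > pos(i) + d' and lane(front(i)) = lane(i), and for all k ≠ nil with k ≠ i, if pos(k) ≥ pos(i) and lane(k) = lane(i) then pos(k) ≥ pos(front(i)); moreover for all i ≠ nil with front(i) = nil, every k ≠ nil with k ≠ i and pos(k) ≥ pos(i) has lane(k) ≠ lane(i). If d' ≥ d_s, then the global safety property holds: for all i ≠ nil, j ≠ nil with i ≠ j, if lane(i) = lane(j) and pos(i) > pos(j), then pos(i) - pos(j) ≥ d_s. -/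
/-- the entry condition (correct front sensor with gap d') implies
the global safety property with safety distance d_s, provided d' ≥ d_s. -/
theorem entry_implies_global_safety
    {I : Type*} (nil : I) (pos lane : I → ℝ) (front : I → I)
    (d' ds : ℝ)
    (h1 : ∀ i, i ≠ nil → front i ≠ nil →
      pos (front i) > pos i + d' ∧ lane (front i) = lane i ∧
      ∀ k, k ≠ nil → k ≠ i → pos k ≥ pos i → lane k = lane i →
        pos k ≥ pos (front i))
    (h2 : ∀ i, i ≠ nil → front i = nil →
      ∀ k, k ≠ nil → k ≠ i → pos k ≥ pos i → lane k ≠ lane i)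
    (hd : d' ≥ ds) :
    ∀ i j, i ≠ nil → j ≠ nil → i ≠ j → lane i = lane j → pos i > pos j →
      pos i - pos j ≥ ds := by
  intro i j hi hj hij hl hp
  by_cases hf : front j = nil
  · exact absurd hl (h2 j hj hf i hi hij hp.le)
  · obtain ⟨hgap, _, hmin⟩ := h1 j hj hf
    have := hmin i hi hij hp.le hl
    linarith
end

section
/- In the abstract transition system with exhaustive entry conditions (Definition: (i) Entry(s) → s ∈ Init; (ii) every jump or topology update (s,s') satisfies Entry(s')), suppose additionally that GMR-exhaustive entry conditions hold: condition (ii) is only required for GMR jumps and GMR topology updates, where a state change (s,s') is GMR if s is reachable by a flow from some state satisfying Entry, and the identity flow (s,s) exists for all s. Then the same four conditions as in the main theorem — (1) all Entry states satisfy Safe, (2) Safe is preserved by flows from Entry states, (3) Safe is preserved by GMR jumps, (4) Safe is preserved by GMR topology updates — are equivalent to: Safe holds at every state of every run starting in a state satisfying Entry. -/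
/-- Theorem 3.8 of the paper — with GMR-exhaustive entry
conditions the four invariance conditions are still equivalent to safety of
all runs starting in an Entry state. -/
theorem safety_iff_invariance_conditions_GMR
    {State : Type*} (Init : Set State)
    (Entry Safe : State → Prop)
    (flow jump update : State → State → Prop)
    -- GMR-exhaustive entry conditions
    (hInit : ∀ s, Entry s → s ∈ Init)
    (hEntryPostGMR : ∀ s s', (∃ s0, Entry s0 ∧ flow s0 s) →
      (jump s s' ∨ update s s') → Entry s')
    -- zero-length flows exist
    (hflowRefl : ∀ s, flow s s) :
    (∀ (r : ℕ → State) (N : ℕ),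
        r 0 ∈ Init → Entry (r 0) →
        (∀ n, n < N →
          flow (r n) (r (n+1)) ∨ jump (r n) (r (n+1)) ∨ update (r n) (r (n+1))) →
        (∀ n, n + 1 < N → flow (r n) (r (n+1)) →
          jump (r (n+1)) (r (n+2)) ∨ update (r (n+1)) (r (n+2))) →
        ∀ n, n ≤ N → Safe (r n))
    ↔ ((∀ s, Entry s → Safe s) ∧
       (∀ s s', Entry s → Safe s → flow s s' → Safe s') ∧
       (∀ s s', (∃ s0, Entry s0 ∧ flow s0 s) → Safe s → jump s s' → Safe s') ∧
       (∀ s s', (∃ s0, Entry s0 ∧ flow s0 s) → Safe s → update s s' → Safe s')) := by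
  constructor
  · intro h
    refine ⟨?_, ?_, ?_, ?_⟩
    · intro s hs
      exact h (fun _ => s) 0 (hInit s hs) hs (by omega) (by omega) 0 le_rfl
    · intro s s' hs _ hf
      have := h (fun n => if n = 0 then s else s') 1 (hInit s hs) hs
        (by intro n hn; interval_cases n; simpa using Or.inl hf)
        (by omega) 1 le_rfl
      simpa using this
    · intro s s' ⟨s0, hs0, hf⟩ _ hj
      have := h (fun n => if n = 0 then s0 else if n = 1 then s else s') 2
        (hInit s0 hs0) hs0
        (by intro n hn; interval_cases n
            · simpa using Or.inl hf
            · simpa using Or.inr (Or.inl hj))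
        (by intro n hn _; have hn0 : n = 0 := by omega
            subst hn0; simpa using Or.inl hj) 2 le_rfl
      simpa using this
    · intro s s' ⟨s0, hs0, hf⟩ _ hu
      have := h (fun n => if n = 0 then s0 else if n = 1 then s else s') 2
        (hInit s0 hs0) hs0
        (by intro n hn; interval_cases n
            · simpa using Or.inl hf
            · simpa using Or.inr (Or.inr hu))
        (by intro n hn _; have hn0 : n = 0 := by omega
            subst hn0; simpa using Or.inr hu) 2 le_rfl
      simpa using this
  · rintro ⟨h1, h2, h3, h4⟩ r N _ hE h5 h6 n hn
    -- strengthen the invariant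
    suffices H : ∀ n, n ≤ N → Safe (r n) ∧
        (Entry (r n) ∨ ∃ m, m + 1 = n ∧ Entry (r m) ∧ Safe (r m) ∧ flow (r m) (r n)) from
      (H n hn).1
    intro n
    induction n with
    | zero => intro _; exact ⟨h1 _ hE, Or.inl hE⟩
    | succ k ih =>
      intro hk
      have hkN : k < N := by omega
      obtain ⟨hSafe, hcase⟩ := ih (by omega)
      rcases hcase with hEk | ⟨m, hm, hEm, hSm, hfm⟩
      · rcases h5 k hkN with hf | hju
        · exact ⟨h2 _ _ hEk hSafe hf, Or.inr ⟨k, rfl, hEk, hSafe, hf⟩⟩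
        · have hgmr : ∃ s0, Entry s0 ∧ flow s0 (r k) := ⟨r k, hEk, hflowRefl _⟩
          have hE' := hEntryPostGMR _ _ hgmr hju
          rcases hju with hj | hu
          · exact ⟨h3 _ _ hgmr hSafe hj, Or.inl hE'⟩
          · exact ⟨h4 _ _ hgmr hSafe hu, Or.inl hE'⟩
      · subst hm
        have hju := h6 m (by omega) hfm
        have hgmr : ∃ s0, Entry s0 ∧ flow s0 (r (m+1)) := ⟨r m, hEm, hfm⟩
        have hE' := hEntryPostGMR _ _ hgmr hju
        rcases hju with hj | hu
        · exact ⟨h3 _ _ hgmr hSafe hj, Or.inl hE'⟩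
        · exact ⟨h4 _ _ hgmr hSafe hu, Or.inl hE'⟩
end
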